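/- Let α = 2/√3 − 1. For all real numbers λ₁, λ₂ with 0 ≤ λ₁ ≤ 2 and 0 ≤ λ₂ ≤ 2, one has α·(λ₁² + λ₂² − 1)/2 + (1 − α)·((λ₁ − 1)² + (λ₂ − 1)²)/4 ≥ 7/2 − 2√3. -/
import Mathlib

/-- Key elementary optimization: with `α = 2/√3 − 1`, for all `λ₁, λ₂ ∈ [0,2]`,
`α·(λ₁² + λ₂² − 1)/2 + (1 − α)·((λ₁ − 1)² + (λ₂ − 1)²)/4 ≥ 7/2 − 2√3`. -/
theorem stmt_0 (l1 l2 : ℝ) (h1 : 0 ≤ l1) (h1' : l1 ≤ 2) (h2 : 0 ≤ l2) (h2' : l2 ≤ 2) :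
    (2 / Real.sqrt 3 - 1) * ((l1 ^ 2 + l2 ^ 2 - 1) / 2)
      + (1 - (2 / Real.sqrt 3 - 1)) * (((l1 - 1) ^ 2 + (l2 - 1) ^ 2) / 4)
      ≥ 7 / 2 - 2 * Real.sqrt 3 := by
  have hs0 : (0:ℝ) < Real.sqrt 3 := Real.sqrt_pos.mpr (by norm_num)
  have hs : Real.sqrt 3 ^ 2 = 3 := Real.sq_sqrt (by norm_num)
  have hd : (2 / Real.sqrt 3 : ℝ) = 2 * Real.sqrt 3 / 3 := by
    rw [eq_div_iff (by norm_num)]; field_simp; nlinarith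
  rw [hd]
  set s := Real.sqrt 3
  nlinarith [sq_nonneg (l1 - (s - 1)), sq_nonneg (l2 - (s - 1)), hs, hs0,
    mul_nonneg (sq_nonneg (l1 - (s-1))) hs0.le, mul_nonneg (sq_nonneg (l2 - (s-1))) hs0.le]
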